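/- For all real numbers r ≥ 0 and u₁, u₂ ∈ ℝ, one has ∫₀^{2π} exp(r(u₁ cos θ + u₂ sin θ)) dθ = Σ_{n=0}^∞ 2π · r^{2n} (u₁² + u₂²)^n / (2^{2n} (n!)²). -/

import Mathlib

open Real MeasureTheory

private lemma prodId (m : ℕ) :
    (∏ i ∈ Finset.range m, ((2*(i:ℝ)+1)/(2*(i:ℝ)+2)))
      = ((2*m).factorial : ℝ) / (4^m * ((m.factorial : ℝ))^2) := by
  induction m with
  | zero => simp
  | succ k ih =>
    rw [Finset.prod_range_succ, ih, show 2*(k+1) = (2*k+1)+1 from by ring]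
    simp only [Nat.factorial_succ]
    push_cast
    have h1 : ((2*k).factorial : ℝ) ≠ 0 := Nat.cast_ne_zero.2 (Nat.factorial_ne_zero _)
    have h2 : ((k.factorial : ℝ)) ≠ 0 := Nat.cast_ne_zero.2 (Nat.factorial_ne_zero _)
    have h3 : (4:ℝ)^k ≠ 0 := by positivity
    have h4 : (2*(k:ℝ)+2) ≠ 0 := by positivity
    field_simp
    ring

private lemma cosPowInt (n : ℕ) :
    (∫ θ in (0:ℝ)..(2*π), Real.cos θ ^ n)
      = (1 + (-1:ℝ)^n) * ∫ x in (0:ℝ)..π, Real.sin x ^ n := by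
  have hcont : ∀ a b : ℝ, IntervalIntegrable (fun x => Real.sin x ^ n) volume a b :=
    fun a b => (continuous_sin.pow n).intervalIntegrable a b
  have h1 : (∫ θ in (0:ℝ)..(2*π), Real.cos θ ^ n)
      = ∫ θ in (0:ℝ)..(2*π), Real.sin (θ + π/2) ^ n := by
    simp [Real.sin_add_pi_div_two]
  have h2 : (∫ θ in (0:ℝ)..(2*π), Real.sin (θ + π/2) ^ n)
      = ∫ x in (0+π/2:ℝ)..(2*π+π/2), Real.sin x ^ n :=
    intervalIntegral.integral_comp_add_right (fun x => Real.sin x ^ n) (π/2)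
  have hper : Function.Periodic (fun x => Real.sin x ^ n) (2*π) := fun x => by
    simp [Real.sin_add_two_pi]
  have h3 : (∫ x in (0+π/2:ℝ)..(2*π+π/2), Real.sin x ^ n)
      = ∫ x in (0:ℝ)..(2*π), Real.sin x ^ n := by
    have := hper.intervalIntegral_add_eq (π/2) 0
    rw [show (0+π/2:ℝ) = π/2 from by ring, show (2*π+π/2:ℝ) = π/2 + 2*π from by ring,
      this, zero_add]
  have h4 : (∫ x in (0:ℝ)..(2*π), Real.sin x ^ n)
      = (∫ x in (0:ℝ)..π, Real.sin x ^ n) + ∫ x in (π:ℝ)..(2*π), Real.sin x ^ n :=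
    (intervalIntegral.integral_add_adjacent_intervals (hcont 0 π) (hcont π (2*π))).symm
  have h5 : (∫ x in (π:ℝ)..(2*π), Real.sin x ^ n)
      = (-1:ℝ)^n * ∫ x in (0:ℝ)..π, Real.sin x ^ n := by
    have := intervalIntegral.integral_comp_add_right (a := (0:ℝ)) (b := π)
      (fun x => Real.sin x ^ n) π
    rw [zero_add, show (π + π : ℝ) = 2*π from by ring] at this
    rw [← this, ← intervalIntegral.integral_const_mul]
    congr 1
    funext x
    rw [Real.sin_add_pi, neg_pow]
  rw [h1, h2, h3, h4, h5]
  ring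

private lemma keyInt (a : ℝ) :
    (∫ θ in (0:ℝ)..(2*π), Real.exp (a * Real.cos θ))
      = ∑' n : ℕ, 2 * π * a^(2*n) / (4^n * ((n.factorial : ℝ))^2) := by
  have h2π : (0:ℝ) ≤ 2*π := by positivity
  have hexp : ∀ x : ℝ, Real.exp x = ∑' n : ℕ, x ^ n / n.factorial := by
    intro x; rw [Real.exp_eq_exp_ℝ, NormedSpace.exp_eq_tsum_div]
  have hswap : (∫ θ in (0:ℝ)..(2*π), Real.exp (a * Real.cos θ))
      = ∑' n : ℕ, ∫ θ in Set.Ioc (0:ℝ) (2*π), (a * Real.cos θ) ^ n / n.factorial := by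
    rw [intervalIntegral.integral_of_le h2π]
    simp_rw [hexp]
    rw [← MeasureTheory.integral_tsum_of_summable_integral_norm]
    · intro n
      exact (Continuous.integrableOn_Ioc (by fun_prop))
    · apply Summable.of_nonneg_of_le
        (fun n => integral_nonneg fun θ => norm_nonneg _)
        ?_ ((Real.summable_pow_div_factorial |a|).mul_left (2*π))
      intro n
      have hb : ∀ θ ∈ Set.Ioc (0:ℝ) (2*π),
          ‖‖(a * Real.cos θ) ^ n / (n.factorial : ℝ)‖‖ ≤ |a|^n / n.factorial := by
        intro θ _
        rw [norm_norm, norm_div, norm_pow, norm_mul]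
        simp only [Real.norm_eq_abs]
        rw [Nat.abs_cast]
        gcongr
        exact mul_le_of_le_one_right (abs_nonneg a) (Real.abs_cos_le_one θ)
      have hfin : volume (Set.Ioc (0:ℝ) (2*π)) < ⊤ := by
        rw [Real.volume_Ioc]; exact ENNReal.ofReal_lt_top
      have := MeasureTheory.norm_setIntegral_le_of_norm_le_const hfin hb
      rw [Real.norm_eq_abs,
        abs_of_nonneg (integral_nonneg fun θ => norm_nonneg _)] at this
      calc (∫ θ in Set.Ioc (0:ℝ) (2*π), ‖(a * Real.cos θ) ^ n / (n.factorial:ℝ)‖)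
          ≤ |a|^n / n.factorial * (volume (Set.Ioc (0:ℝ) (2*π))).toReal := this
        _ = 2*π * (|a|^n / n.factorial) := by
            rw [Real.volume_Ioc, sub_zero, ENNReal.toReal_ofReal (by positivity)]
            ring
  rw [hswap]
  have hterm : ∀ n : ℕ, (∫ θ in Set.Ioc (0:ℝ) (2*π), (a * Real.cos θ) ^ n / n.factorial)
      = a^n / n.factorial * ((1 + (-1:ℝ)^n) * ∫ x in (0:ℝ)..π, Real.sin x ^ n) := by
    intro n
    rw [← intervalIntegral.integral_of_le h2π, ← cosPowInt n,
      ← intervalIntegral.integral_const_mul]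
    congr 1
    funext θ
    rw [mul_pow]
    ring
  simp_rw [hterm]
  have hinj : Function.Injective (fun m : ℕ => 2*m) := fun x y h => by dsimp only at h; omega
  rw [← Function.Injective.tsum_eq hinj (f := fun n : ℕ =>
      a^n / n.factorial * ((1 + (-1:ℝ)^n) * ∫ x in (0:ℝ)..π, Real.sin x ^ n)) ?_]
  · apply tsum_congr
    intro m
    rw [Even.neg_one_pow (even_two_mul m), integral_sin_pow_even, prodId]
    have h1 : ((2*m).factorial : ℝ) ≠ 0 := Nat.cast_ne_zero.2 (Nat.factorial_ne_zero _)
    have h2 : ((m.factorial : ℝ)) ≠ 0 := Nat.cast_ne_zero.2 (Nat.factorial_ne_zero _)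
    have h3 : (4:ℝ)^m ≠ 0 := by positivity
    field_simp
    ring
  · intro n hn
    rcases Nat.even_or_odd n with ⟨k, hk⟩ | hodd
    · exact ⟨k, by dsimp only; omega⟩
    · exfalso
      apply hn
      simp only [Function.mem_support] at *
      rw [Odd.neg_one_pow hodd] at hn
      simp at hn


theorem integral_exp_wave (r u₁ u₂ : ℝ) (hr : 0 ≤ r) :
    ∫ θ in (0:ℝ)..(2 * Real.pi), Real.exp (r * (u₁ * Real.cos θ + u₂ * Real.sin θ)) =
      ∑' n : ℕ, 2 * Real.pi * r ^ (2 * n) * (u₁ ^ 2 + u₂ ^ 2) ^ n /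
        (2 ^ (2 * n) * (n.factorial : ℝ) ^ 2) := by
  set z : ℂ := ⟨u₁, u₂⟩ with hz
  set ρ : ℝ := ‖z‖ with hρ
  set φ : ℝ := Complex.arg z with hφ
  have hu₁ : ρ * Real.cos φ = u₁ := Complex.norm_mul_cos_arg z
  have hu₂ : ρ * Real.sin φ = u₂ := Complex.norm_mul_sin_arg z
  have hsq : ρ^2 = u₁^2 + u₂^2 := by
    rw [hρ, Complex.sq_norm, Complex.normSq_mk]; ring
  have hfun : (fun θ => Real.exp (r * (u₁ * Real.cos θ + u₂ * Real.sin θ)))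
      = fun θ => Real.exp ((r*ρ) * Real.cos (θ - φ)) := by
    funext θ
    congr 1
    rw [Real.cos_sub]
    linear_combination (-(r * Real.cos θ)) * hu₁ + (-(r * Real.sin θ)) * hu₂
  rw [hfun]
  have hshift : (∫ θ in (0:ℝ)..(2*π), Real.exp ((r*ρ) * Real.cos (θ - φ)))
      = ∫ θ in (0:ℝ)..(2*π), Real.exp ((r*ρ) * Real.cos θ) := by
    rw [intervalIntegral.integral_comp_sub_right (fun θ => Real.exp ((r*ρ) * Real.cos θ)) φ]
    have hper : Function.Periodic (fun θ => Real.exp ((r*ρ) * Real.cos θ)) (2*π) := fun x => by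
      simp [Real.cos_add_two_pi]
    have := hper.intervalIntegral_add_eq (-φ) 0
    rw [zero_add] at this
    rw [show (0 - φ : ℝ) = -φ from by ring, show (2*π - φ : ℝ) = -φ + 2*π from by ring, this]
  rw [hshift, keyInt (r*ρ)]
  apply tsum_congr
  intro n
  rw [mul_pow, show ρ^(2*n) = (ρ^2)^n from by rw [← pow_mul], hsq,
    show (2:ℝ)^(2*n) = 4^n from by rw [pow_mul]; norm_num]
  ring
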